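/- Let X be a finite set and f, g : X → X bijections with f ∘ g = g ∘ f. Define the relation x ≡ x' on X by: there exists an integer k ≥ 0 with (f ∘ g)^k(x) = x'. Then ≡ is an equivalence relation; the maps f', g' on X' = X/≡ given by f'([x]) = [f(x)] and g'([x]) = [g(x)] are well defined and bijective; they satisfy f' ∘ g' = g' ∘ f' = id on X'. Consequently S' : X' × X' → X' × X' defined by S'([x],[y]) = ([g(y)],[f(x)]) is a non-degenerate, involutive and braided set-theoretical solution. -/

import Mathlib

namespace YBE

/-- `(X,S)` is non-degenerate: all the maps `g_x = y ↦ S(x,y).1` and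
`f_y = x ↦ S(x,y).2` are bijective. -/
def Nondegenerate {X : Type*} (S : X × X → X × X) : Prop :=
  (∀ x : X, Function.Bijective fun y => (S (x, y)).1) ∧
  (∀ y : X, Function.Bijective fun x => (S (x, y)).2)

/-- `(X,S)` is involutive: `S ∘ S = id`. -/
def InvolutiveSol {X : Type*} (S : X × X → X × X) : Prop := S ∘ S = id

/-- `S¹² = S × id` on `X × X × X`. -/
def S12 {X : Type*} (S : X × X → X × X) : X × X × X → X × X × X :=
  fun p => ((S (p.1, p.2.1)).1, (S (p.1, p.2.1)).2, p.2.2)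

/-- `S²³ = id × S` on `X × X × X`. -/
def S23 {X : Type*} (S : X × X → X × X) : X × X × X → X × X × X :=
  fun p => (p.1, S (p.2.1, p.2.2))

/-- `(X,S)` is braided: `S¹² ∘ S²³ ∘ S¹² = S²³ ∘ S¹² ∘ S²³`. -/
def BraidedSol {X : Type*} (S : X × X → X × X) : Prop :=
  S12 S ∘ S23 S ∘ S12 S = S23 S ∘ S12 S ∘ S23 S

/-- The map `g_x : y ↦ S(x,y).1`. -/
def gmap {X : Type*} (S : X × X → X × X) (x : X) : X → X := fun y => (S (x, y)).1

/-- The map `f_y : x ↦ S(x,y).2`. -/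
def fmap {X : Type*} (S : X × X → X × X) (y : X) : X → X := fun x => (S (x, y)).2

/-- The inverse `g_x⁻¹` of the (bijective) map `g_x`. -/
noncomputable def ginv {X : Type*} [Nonempty X] (S : X × X → X × X) (x : X) : X → X :=
  Function.invFun (gmap S x)

/-- The inverse `f_y⁻¹` of the (bijective) map `f_y`. -/
noncomputable def finv {X : Type*} [Nonempty X] (S : X × X → X × X) (y : X) : X → X :=
  Function.invFun (fmap S y)

/-- The defining relations of the structure monoid: `x·y = t·z` whenever `S(x,y) = (t,z)`. -/
def ybRel {X : Type*} (S : X × X → X × X) : FreeMonoid X → FreeMonoid X → Prop :=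
  fun a b => ∃ x y : X, a = FreeMonoid.of x * FreeMonoid.of y ∧
    b = FreeMonoid.of (S (x, y)).1 * FreeMonoid.of (S (x, y)).2

/-- The structure monoid of `(X,S)`: the monoid presented by generating set `X` and
relations `x·y = t·z` for each `x,y,t,z` with `S(x,y) = (t,z)`. -/
abbrev StructureMonoid {X : Type*} (S : X × X → X × X) : Type _ :=
  (conGen (ybRel S)).Quotient

/-- The image in the structure monoid of a generator `x ∈ X`. -/
def smi {X : Type*} (S : X × X → X × X) (x : X) : StructureMonoid S :=
  (conGen (ybRel S)).mk' (FreeMonoid.of x)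

/-- The defining relations of the structure group, as elements of the free group. -/
def ybGRels {X : Type*} (S : X × X → X × X) : Set (FreeGroup X) :=
  {w | ∃ x y : X, w = FreeGroup.of x * FreeGroup.of y *
    (FreeGroup.of (S (x, y)).1 * FreeGroup.of (S (x, y)).2)⁻¹}

/-- The structure group of `(X,S)`: the group presented by generating set `X` and
relations `x·y = t·z` for each `x,y,t,z` with `S(x,y) = (t,z)`. -/
abbrev StructureGroup {X : Type*} (S : X × X → X × X) : Type _ :=
  PresentedGroup (ybGRels S)

/-- `a` left-divides `b`. -/
def LDvd {M : Type*} [Monoid M] (a b : M) : Prop := ∃ c, b = a * c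

/-- `m` is a right lcm of the family `a`: each `a i` left-divides `m`, and `m`
left-divides every common right multiple of the `a i`. -/
def IsRightLcm {M : Type*} [Monoid M] {ι : Sort*} (a : ι → M) (m : M) : Prop :=
  (∀ i, LDvd (a i) m) ∧ ∀ w, (∀ i, LDvd (a i) w) → LDvd m w

/-- The defining relations of the structure group of the permutation solution
`S(x,y) = (g(y), f(x))`: `x·y = g(y)·f(x)` for all `x, y ∈ X`. -/
def permRels {X : Type*} (f g : X → X) : Set (FreeGroup X) :=
  {w | ∃ x y : X, w = FreeGroup.of x * FreeGroup.of y *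
    (FreeGroup.of (g y) * FreeGroup.of (f x))⁻¹}

/-- The relation `x ≡ x′` iff `(f ∘ g)^[k] x = x′` for some `k ≥ 0`. -/
def pgRel {X : Type*} (f g : X → X) : X → X → Prop :=
  fun a b => ∃ k : ℕ, (f ∘ g)^[k] a = b


/-- The relation `≡` is an equivalence relation; the induced maps `f′, g′` on `X/≡` are
well defined, bijective and mutually inverse, and the induced permutation solution
`S′([x],[y]) = ([g(y)],[f(x)])` is non-degenerate, involutive and braided. -/
theorem stmt17 {X : Type*} [Finite X] (f g : X → X)
    (hf : Function.Bijective f) (hg : Function.Bijective g) (hc : f ∘ g = g ∘ f) :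
    Equivalence (pgRel f g) ∧
    ∃ f' g' : Quot (pgRel f g) → Quot (pgRel f g),
      (∀ x : X, f' (Quot.mk (pgRel f g) x) = Quot.mk (pgRel f g) (f x)) ∧
      (∀ x : X, g' (Quot.mk (pgRel f g) x) = Quot.mk (pgRel f g) (g x)) ∧
      Function.Bijective f' ∧ Function.Bijective g' ∧
      f' ∘ g' = id ∧ g' ∘ f' = id ∧
      Nondegenerate (fun p : Quot (pgRel f g) × Quot (pgRel f g) => (g' p.2, f' p.1)) ∧
      InvolutiveSol (fun p : Quot (pgRel f g) × Quot (pgRel f g) => (g' p.2, f' p.1)) ∧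
      BraidedSol (fun p : Quot (pgRel f g) × Quot (pgRel f g) => (g' p.2, f' p.1)) := by
  classical
  -- Notation
  set h : X → X := f ∘ g with hh
  have hb : Function.Bijective h := hf.comp hg
  -- a positive power of h is the identity
  obtain ⟨n, hn1, hnid⟩ : ∃ n : ℕ, 1 ≤ n ∧ h^[n] = id := by
    let e : Equiv.Perm X := Equiv.ofBijective h hb
    have : Finite (Equiv.Perm X) := inferInstance
    refine ⟨orderOf e, orderOf_pos e, ?_⟩
    funext x
    have : (e ^ orderOf e) x = x := by rw [pow_orderOf_eq_one]; rfl
    rw [Equiv.Perm.coe_pow] at this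
    exact this
  -- equivalence
  have hequiv : Equivalence (pgRel f g) := by
    constructor
    · exact fun a => ⟨0, rfl⟩
    · rintro a b ⟨k, hk⟩
      refine ⟨k * (n - 1), ?_⟩
      have : h^[k * (n - 1)] (h^[k] a) = h^[k * n] a := by
        rw [← Function.iterate_add_apply]
        congr 1
        obtain ⟨m, rfl⟩ : ∃ m, n = m + 1 := ⟨n - 1, by omega⟩
        simp [Nat.mul_add]
      rw [hk] at this
      rw [this]
      have : h^[k * n] = (h^[n])^[k] := by
        rw [← Function.iterate_mul, Nat.mul_comm]
      rw [this, hnid]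
      simp
    · rintro a b c ⟨k, hk⟩ ⟨l, hl⟩
      exact ⟨l + k, by rw [Function.iterate_add_apply, hk, hl]⟩
  -- commutation of f and g with h
  have hc' : f ∘ g = g ∘ f := hh.symm.trans hc
  have hcf : ∀ (k : ℕ) (a : X), f (h^[k] a) = h^[k] (f a) := by
    have hcomm : Function.Commute f h := by
      intro a
      show f (h a) = h (f a)
      simp only [hh, Function.comp_apply]
      exact congrArg f (congrFun hc' a)
    intro k a
    exact (hcomm.iterate_right k) a
  have hcg : ∀ (k : ℕ) (a : X), g (h^[k] a) = h^[k] (g a) := by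
    have hcomm : Function.Commute g h := by
      intro a
      show g (h a) = h (g a)
      simp only [hh, Function.comp_apply]
      exact (congrFun hc' (g a)).symm
    intro k a
    exact (hcomm.iterate_right k) a
  refine ⟨hequiv, ?_⟩
  -- induced maps
  refine ⟨Quot.map f (by rintro a b ⟨k, hk⟩; exact ⟨k, by rw [← hcf, hk]⟩),
          Quot.map g (by rintro a b ⟨k, hk⟩; exact ⟨k, by rw [← hcg, hk]⟩),
          fun x => rfl, fun x => rfl, ?_⟩
  set f' : Quot (pgRel f g) → Quot (pgRel f g) :=
    Quot.map f (by rintro a b ⟨k, hk⟩; exact ⟨k, by rw [← hcf, hk]⟩) with hf'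
  set g' : Quot (pgRel f g) → Quot (pgRel f g) :=
    Quot.map g (by rintro a b ⟨k, hk⟩; exact ⟨k, by rw [← hcg, hk]⟩) with hg'
  have hfg : ∀ q, f' (g' q) = q := by
    rintro ⟨a⟩
    show Quot.mk _ (f (g a)) = Quot.mk _ a
    exact (Quot.sound ⟨1, by simp [hh]⟩).symm
  have hgf : ∀ q, g' (f' q) = q := by
    rintro ⟨a⟩
    show Quot.mk _ (g (f a)) = Quot.mk _ a
    refine (Quot.sound ⟨1, ?_⟩).symm
    simpa [hh] using congrFun hc' a
  have hbf : Function.Bijective f' :=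
    Function.bijective_iff_has_inverse.mpr ⟨g', hgf, hfg⟩
  have hbg : Function.Bijective g' :=
    Function.bijective_iff_has_inverse.mpr ⟨f', hfg, hgf⟩
  refine ⟨hbf, hbg, funext hfg, funext hgf, ⟨fun _ => hbg, fun _ => hbf⟩, ?_, ?_⟩
  · funext p
    simp only [Function.comp_apply, id_eq]
    exact Prod.ext (hgf p.1) (hfg p.2)
  · funext p
    obtain ⟨x, y, z⟩ := p
    simp only [S12, S23, Function.comp_apply]
    refine Prod.ext rfl (Prod.ext ?_ rfl)
    show f' (g' y) = g' (f' y)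
    rw [hfg, hgf]
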